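/- Let C be a closed convex subset of a Hilbert space H and T : C → C nonexpansive with F(T) ≠ ∅. Let α_n, β_n ∈ [0,1] with α_n ≤ 1 − δ for some δ ∈ (0,1] and β_n → 1. Define x₀ ∈ C, z_n = β_n x_n + (1−β_n)Tx_n, y_n = α_n x_n + (1−α_n)Tz_n, C_n = {v ∈ C : ‖y_n − v‖² ≤ ‖x_n − v‖² + (1−α_n)(‖z_n‖² − ‖x_n‖² + 2⟨x_n − z_n, v⟩)}, Q_n = {v ∈ C : ⟨x₀ − x_n, x_n − v⟩ ≥ 0}, x_{n+1} = P_{C_n ∩ Q_n} x₀. Then x_n converges strongly to P_{F(T)} x₀. -/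

import Mathlib

open Filter Topology

section Aux
variable {H : Type*} [NormedAddCommGroup H] [InnerProductSpace ℝ H]

lemma myx_comb_sq (t : ℝ) (u w v : H) :
    ‖(t • u + (1 - t) • w) - v‖^2
      = t * ‖u - v‖^2 + (1 - t) * ‖w - v‖^2 - t * (1 - t) * ‖u - w‖^2 := by
  simp only [← real_inner_self_eq_norm_sq, inner_sub_left, inner_sub_right, inner_add_left,
    inner_add_right, real_inner_smul_left, real_inner_smul_right]
  rw [real_inner_comm w u, real_inner_comm v u, real_inner_comm v w]
  ring

lemma myx_ultralim_exists (U : Ultrafilter ℕ) (f : ℕ → ℝ) (M : ℝ) (hf : ∀ n, |f n| ≤ M) :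
    ∃ L, Tendsto f (↑U) (𝓝 L) := by
  have hcpt : IsCompact (Set.Icc (-M) M) := isCompact_Icc
  have hle : ↑(U.map f) ≤ 𝓟 (Set.Icc (-M) M) := by
    rw [le_principal_iff]
    exact Filter.mem_map.mpr (Filter.univ_mem' fun n => abs_le.mp (hf n))
  obtain ⟨L, _, hL⟩ := hcpt.ultrafilter_le_nhds (U.map f) hle
  exact ⟨L, hL⟩

lemma myx_tendsto_of_sq {f : ℕ → ℝ} (hf : ∀ n, 0 ≤ f n)
    (h : Tendsto (fun n => f n ^ 2) atTop (𝓝 0)) : Tendsto f atTop (𝓝 0) := by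
  have h2 := (Real.continuous_sqrt.tendsto 0).comp h
  simp only [Function.comp_def, Real.sqrt_zero] at h2
  exact h2.congr fun n => Real.sqrt_sq (hf n)

lemma myx_exists_minimizer [CompleteSpace H] (C : Set H) (hC : IsClosed C) (hconv : Convex ℝ C)
    (hne : C.Nonempty) (φ : H → ℝ) (K : ℝ)
    (hnn : ∀ v ∈ C, 0 ≤ φ v)
    (hlip : ∀ u v : H, φ u ≤ φ v + (K + 2*‖v‖ + ‖v - u‖) * ‖v - u‖)
    (hmid : ∀ u ∈ C, ∀ w ∈ C,
      ‖u - w‖^2 ≤ 2*φ u + 2*φ w - 4*φ ((1/2 : ℝ) • u + (1/2 : ℝ) • w)) :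
    ∃ c ∈ C, ∀ v ∈ C, φ c ≤ φ v := by
  set S : Set ℝ := φ '' C with hS
  have hSne : S.Nonempty := hne.image φ
  have hSbdd : BddBelow S := ⟨0, by rintro r ⟨v, hv, rfl⟩; exact hnn v hv⟩
  set μ : ℝ := sInf S with hμ
  have hμle : ∀ v ∈ C, μ ≤ φ v := fun v hv => csInf_le hSbdd ⟨v, hv, rfl⟩
  have hmin : ∀ k : ℕ, ∃ u ∈ C, φ u < μ + 1/(k+1) := by
    intro k
    have hlt : sInf S < μ + 1/(k+1) := by
      have : (0:ℝ) < 1/(k+1) := by positivity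
      linarith
    obtain ⟨a, ⟨u, hu, rfl⟩, ha⟩ := exists_lt_of_csInf_lt hSne hlt
    exact ⟨u, hu, ha⟩
  choose v hvC hvlt using hmin
  have hdist : ∀ j k : ℕ, ‖v j - v k‖^2 ≤ 2*(1/(j+1) + 1/(k+1)) := by
    intro j k
    have hm : (1/2 : ℝ) • v j + (1/2 : ℝ) • v k ∈ C :=
      hconv (hvC j) (hvC k) (by norm_num) (by norm_num) (by norm_num)
    have h1 := hμle _ hm
    have h2 := hmid _ (hvC j) _ (hvC k)
    have h3 := hvlt j
    have h4 := hvlt k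
    linarith
  have hcauchy : CauchySeq v := by
    rw [Metric.cauchySeq_iff]
    intro ε hε
    obtain ⟨N, hN⟩ := exists_nat_gt (4/ε^2)
    refine ⟨N, fun m hm n hn => ?_⟩
    have hNpos : (0:ℝ) < N + 1 := by positivity
    have h4N : 4/(N+1) < ε^2 := by
      rw [div_lt_iff₀ hNpos]
      have hε2 : (0:ℝ) < ε^2 := by positivity
      have : (4:ℝ)/ε^2 < N + 1 := by linarith
      calc (4:ℝ) = (4/ε^2) * ε^2 := by field_simp
        _ < (N+1) * ε^2 := by nlinarith
        _ = ε^2 * (N+1) := by ring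
    have hmono : ∀ i : ℕ, N ≤ i → (1:ℝ)/(i+1) ≤ 1/(N+1) := by
      intro i hi
      apply one_div_le_one_div_of_le hNpos
      have : (N:ℝ) ≤ i := Nat.cast_le.mpr hi
      linarith
    have hsq : ‖v m - v n‖^2 < ε^2 := by
      have := hdist m n
      have h1 := hmono m hm
      have h2 := hmono n hn
      have h3 : (4:ℝ)/(N+1) = 4*(1/(N+1)) := by ring
      have : 2 * ((1:ℝ)/(m+1) + 1/(n+1)) ≤ 4/(N+1) := by rw [h3]; linarith
      linarith
    have : ‖v m - v n‖ < ε := by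
      have := lt_of_pow_lt_pow_left₀ 2 (le_of_lt hε) hsq
      exact this
    simpa [dist_eq_norm] using this
  obtain ⟨c, hctend⟩ := cauchySeq_tendsto_of_complete hcauchy
  have hcC : c ∈ C := hC.mem_of_tendsto hctend (Eventually.of_forall hvC)
  refine ⟨c, hcC, fun w hw => ?_⟩
  have hφc : φ c ≤ μ := by
    have hbound : ∀ k, φ c ≤ φ (v k) + (K + 2*‖v k‖ + ‖v k - c‖) * ‖v k - c‖ :=
      fun k => hlip c (v k)
    have hvnorm : Tendsto (fun k => ‖v k‖) atTop (𝓝 ‖c‖) := hctend.norm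
    have hvc : Tendsto (fun k => ‖v k - c‖) atTop (𝓝 0) := by
      rw [← tendsto_iff_norm_sub_tendsto_zero] at *
      exact hctend
    have hφv : Tendsto (fun k => φ (v k)) atTop (𝓝 μ) := by
      have hup : Tendsto (fun k : ℕ => μ + 1/(k+1)) atTop (𝓝 (μ + 0)) :=
        tendsto_const_nhds.add tendsto_one_div_add_atTop_nhds_zero_nat
      rw [add_zero] at hup
      exact tendsto_of_tendsto_of_tendsto_of_le_of_le tendsto_const_nhds hup
        (fun k => hμle _ (hvC k)) (fun k => le_of_lt (hvlt k))
    have hrhs : Tendsto (fun k => φ (v k) + (K + 2*‖v k‖ + ‖v k - c‖) * ‖v k - c‖) atTop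
        (𝓝 (μ + (K + 2*‖c‖ + 0) * 0)) :=
      hφv.add (((tendsto_const_nhds.add (hvnorm.const_mul 2)).add hvc).mul hvc)
    rw [mul_zero, add_zero] at hrhs
    exact ge_of_tendsto' hrhs hbound
  exact hφc.trans (hμle _ hw)

end Aux

set_option maxHeartbeats 2000000 in
/-- Martinez-Yanes–Xu: strong convergence of the modified Ishikawa
hybrid projection algorithm for nonexpansive mappings. -/
theorem martinez_yanes_xu_strong_convergence
    (H : Type*) [NormedAddCommGroup H] [InnerProductSpace ℝ H] [CompleteSpace H]
    (C : Set H) (hclosed : IsClosed C) (hconv : Convex ℝ C)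
    (T : H → H) (hT : Set.MapsTo T C C)
    (hne : ∀ u ∈ C, ∀ v ∈ C, ‖T u - T v‖ ≤ ‖u - v‖)
    (hfix : {q ∈ C | T q = q}.Nonempty)
    (α β : ℕ → ℝ) (hα : ∀ n, α n ∈ Set.Icc (0:ℝ) 1) (hβ : ∀ n, β n ∈ Set.Icc (0:ℝ) 1)
    (δ : ℝ) (hδ : δ ∈ Set.Ioc (0:ℝ) 1) (hαδ : ∀ n, α n ≤ 1 - δ)
    (hβlim : Filter.Tendsto β Filter.atTop (nhds 1))
    (x z y : ℕ → H) (x₀ : H) (hx₀ : x 0 = x₀) (hx₀C : x₀ ∈ C)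
    (hz : ∀ n, z n = β n • x n + (1 - β n) • T (x n))
    (hy : ∀ n, y n = α n • x n + (1 - α n) • T (z n))
    (Cs Qs : ℕ → Set H)
    (hCs : ∀ n, Cs n = {v ∈ C | ‖y n - v‖ ^ 2 ≤ ‖x n - v‖ ^ 2 +
        (1 - α n) * (‖z n‖ ^ 2 - ‖x n‖ ^ 2 + 2 * (inner ℝ (x n - z n) v : ℝ))})
    (hQs : ∀ n, Qs n = {v ∈ C | (inner ℝ (x₀ - x n) (x n - v) : ℝ) ≥ 0})
    (hxproj : ∀ n, x (n + 1) ∈ Cs n ∩ Qs n ∧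
        ∀ v ∈ Cs n ∩ Qs n, ‖x₀ - x (n + 1)‖ ≤ ‖x₀ - v‖) :
    ∃ q, (q ∈ C ∧ T q = q) ∧ (∀ p ∈ C, T p = p → ‖x₀ - q‖ ≤ ‖x₀ - p‖) ∧
      Filter.Tendsto x Filter.atTop (nhds q) := by
  obtain ⟨p₀, hp₀C, hp₀T⟩ := hfix
  -- x n ∈ C
  have hxC : ∀ n, x n ∈ C := by
    intro n
    cases n with
    | zero => rw [hx₀]; exact hx₀C
    | succ n =>
      have h := (hxproj n).1.1
      rw [hCs n] at h
      exact h.1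
  have hzC : ∀ n, z n ∈ C := by
    intro n
    rw [hz n]
    exact hconv (hxC n) (hT (hxC n)) (hβ n).1 (by linarith [(hβ n).2]) (by ring)
  -- characterization of Cs
  have hCmem : ∀ n v, v ∈ Cs n ↔ v ∈ C ∧
      ‖y n - v‖^2 ≤ α n * ‖x n - v‖^2 + (1 - α n) * ‖z n - v‖^2 := by
    intro n v
    rw [hCs n]
    simp only [Set.mem_setOf_eq]
    have key : ‖x n - v‖^2 + (1 - α n) * (‖z n‖^2 - ‖x n‖^2 + 2*(inner ℝ (x n - z n) v : ℝ))
        = α n * ‖x n - v‖^2 + (1 - α n) * ‖z n - v‖^2 := by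
      simp only [norm_sub_sq_real, inner_sub_left]
      ring
    constructor
    · rintro ⟨h1, h2⟩; exact ⟨h1, by linarith⟩
    · rintro ⟨h1, h2⟩; exact ⟨h1, by linarith⟩
  have hQmem : ∀ n v, v ∈ Qs n ↔ v ∈ C ∧ 0 ≤ (inner ℝ (x₀ - x n) (x n - v) : ℝ) := by
    intro n v
    rw [hQs n]
    simp only [Set.mem_setOf_eq, ge_iff_le]
  -- fixed points belong to Cs n
  have hFCs : ∀ n, ∀ p ∈ C, T p = p → p ∈ Cs n := by
    intro n p hp hpT
    rw [hCmem]
    refine ⟨hp, ?_⟩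
    have h1 : ‖y n - p‖^2 = α n * ‖x n - p‖^2 + (1 - α n) * ‖T (z n) - p‖^2
        - α n * (1 - α n) * ‖x n - T (z n)‖^2 := by
      rw [hy n, myx_comb_sq]
    have h2 : ‖T (z n) - p‖ ≤ ‖z n - p‖ := by
      calc ‖T (z n) - p‖ = ‖T (z n) - T p‖ := by rw [hpT]
        _ ≤ ‖z n - p‖ := hne _ (hzC n) _ hp
    have h2' : ‖T (z n) - p‖^2 ≤ ‖z n - p‖^2 :=
      pow_le_pow_left₀ (norm_nonneg _) h2 2
    have h3 : (1 - α n) * ‖T (z n) - p‖^2 ≤ (1 - α n) * ‖z n - p‖^2 :=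
      mul_le_mul_of_nonneg_left h2' (by linarith [(hα n).2])
    have h4 : 0 ≤ α n * (1 - α n) * ‖x n - T (z n)‖^2 :=
      mul_nonneg (mul_nonneg (hα n).1 (by linarith [(hα n).2])) (sq_nonneg _)
    linarith
  -- affine characterization of the Cs inequality
  have hCaff : ∀ n v, (‖y n - v‖^2 ≤ α n * ‖x n - v‖^2 + (1 - α n) * ‖z n - v‖^2) ↔
      (‖y n‖^2 - α n * ‖x n‖^2 - (1 - α n) * ‖z n‖^2
        ≤ 2 * (inner ℝ (y n - α n • x n - (1 - α n) • z n) v : ℝ)) := by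
    intro n v
    have key : α n * ‖x n - v‖^2 + (1 - α n) * ‖z n - v‖^2 - ‖y n - v‖^2
        = 2 * (inner ℝ (y n - α n • x n - (1 - α n) • z n) v : ℝ)
          - (‖y n‖^2 - α n * ‖x n‖^2 - (1 - α n) * ‖z n‖^2) := by
      simp only [norm_sub_sq_real, inner_sub_left, real_inner_smul_left]
      ring
    constructor <;> intro h <;> linarith
  -- segments stay in Cs n ∩ Qs n
  have hseg : ∀ n, ∀ p₁ ∈ Cs n ∩ Qs n, ∀ p₂ ∈ Cs n ∩ Qs n, ∀ t : ℝ, 0 ≤ t → t ≤ 1 →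
      (1-t) • p₁ + t • p₂ ∈ Cs n ∩ Qs n := by
    intro n p₁ hp₁ p₂ hp₂ t ht0 ht1
    obtain ⟨hp₁C, hp₁ineq⟩ := (hCmem n p₁).mp hp₁.1
    obtain ⟨hp₂C, hp₂ineq⟩ := (hCmem n p₂).mp hp₂.1
    obtain ⟨_, hp₁Q⟩ := (hQmem n p₁).mp hp₁.2
    obtain ⟨_, hp₂Q⟩ := (hQmem n p₂).mp hp₂.2
    have hmemC : (1-t) • p₁ + t • p₂ ∈ C :=
      hconv hp₁C hp₂C (by linarith) ht0 (by ring)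
    constructor
    · rw [hCmem]
      refine ⟨hmemC, ?_⟩
      rw [hCaff] at hp₁ineq hp₂ineq ⊢
      have hlin : (inner ℝ (y n - α n • x n - (1 - α n) • z n) ((1-t) • p₁ + t • p₂) : ℝ)
          = (1-t) * (inner ℝ (y n - α n • x n - (1 - α n) • z n) p₁ : ℝ)
            + t * (inner ℝ (y n - α n • x n - (1 - α n) • z n) p₂ : ℝ) := by
        rw [inner_add_right, real_inner_smul_right, real_inner_smul_right]
      rw [hlin]
      nlinarith
    · rw [hQmem]
      refine ⟨hmemC, ?_⟩
      have hsplit : x n - ((1-t) • p₁ + t • p₂) = (1-t) • (x n - p₁) + t • (x n - p₂) := by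
        module
      rw [hsplit, inner_add_right, real_inner_smul_right, real_inner_smul_right]
      have := mul_nonneg (by linarith : (0:ℝ) ≤ 1 - t) hp₁Q
      have := mul_nonneg ht0 hp₂Q
      linarith
  -- variational inequality for the projection step
  have hvar : ∀ n, ∀ p ∈ Cs n ∩ Qs n, 0 ≤ (inner ℝ (x₀ - x (n+1)) (x (n+1) - p) : ℝ) := by
    intro n p hp
    have hx1 := (hxproj n).1
    have key : ∀ t : ℝ, 0 < t → t ≤ 1 →
        2 * (inner ℝ (x₀ - x (n+1)) (p - x (n+1)) : ℝ) ≤ t * ‖p - x (n+1)‖^2 := by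
      intro t ht0 ht1
      have hv := hseg n _ hx1 _ hp t ht0.le ht1
      have hmin := (hxproj n).2 _ hv
      have hsq : ‖x₀ - x (n+1)‖^2 ≤ ‖x₀ - ((1-t) • x (n+1) + t • p)‖^2 :=
        pow_le_pow_left₀ (norm_nonneg _) hmin 2
      have hexp : x₀ - ((1-t) • x (n+1) + t • p) = (x₀ - x (n+1)) - t • (p - x (n+1)) := by
        module
      have hres : ‖(x₀ - x (n+1)) - t • (p - x (n+1))‖^2
          = ‖x₀ - x (n+1)‖^2 - 2*(t * (inner ℝ (x₀ - x (n+1)) (p - x (n+1)) : ℝ))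
            + t^2 * ‖p - x (n+1)‖^2 := by
        rw [norm_sub_sq_real, real_inner_smul_right, norm_smul, Real.norm_eq_abs, mul_pow, sq_abs]
      rw [hexp, hres] at hsq
      nlinarith
    have hlim : Tendsto (fun k : ℕ => (1/(k+1) : ℝ) * ‖p - x (n+1)‖^2) atTop (𝓝 0) := by
      have := tendsto_one_div_add_atTop_nhds_zero_nat.mul_const (‖p - x (n+1)‖^2)
      simpa using this
    have hle : 2 * (inner ℝ (x₀ - x (n+1)) (p - x (n+1)) : ℝ) ≤ 0 := by
      refine ge_of_tendsto' hlim fun k => ?_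
      refine key (1/(k+1)) (by positivity) ?_
      rw [div_le_one (by positivity)]
      have : (0:ℝ) ≤ (k:ℝ) := Nat.cast_nonneg k
      linarith
    have : (inner ℝ (x₀ - x (n+1)) (x (n+1) - p) : ℝ)
        = - (inner ℝ (x₀ - x (n+1)) (p - x (n+1)) : ℝ) := by
      rw [← inner_neg_right, neg_sub]
    rw [this]
    linarith
  -- fixed points belong to Qs n
  have hFQ : ∀ n, ∀ p ∈ C, T p = p → p ∈ Qs n := by
    intro n
    induction n with
    | zero =>
      intro p hp hpT
      rw [hQmem]
      refine ⟨hp, ?_⟩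
      rw [hx₀]
      simp
    | succ n ih =>
      intro p hp hpT
      rw [hQmem]
      exact ⟨hp, hvar n p ⟨hFCs n p hp hpT, ih p hp hpT⟩⟩
  have hFin : ∀ n, ∀ p ∈ C, T p = p → p ∈ Cs n ∩ Qs n :=
    fun n p hp hpT => ⟨hFCs n p hp hpT, hFQ n p hp hpT⟩
  -- the distances ‖x₀ - x n‖ are bounded by ‖x₀ - p‖ for any fixed point p
  have hbnd : ∀ p ∈ C, T p = p → ∀ n, ‖x₀ - x n‖ ≤ ‖x₀ - p‖ := by
    intro p hp hpT n
    cases n with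
    | zero => rw [hx₀]; simp
    | succ n => exact (hxproj n).2 p (hFin n p hp hpT)
  set s : ℕ → ℝ := fun n => ‖x₀ - x n‖^2 with hs
  -- monotonicity with quantitative increment
  have hsmono : ∀ n, s n + ‖x n - x (n+1)‖^2 ≤ s (n+1) := by
    intro n
    have hq := ((hQmem n _).mp (hxproj n).1.2).2
    have hsplit : x₀ - x (n+1) = (x₀ - x n) + (x n - x (n+1)) := by abel
    have : s (n+1) = s n + 2*(inner ℝ (x₀ - x n) (x n - x (n+1)) : ℝ) + ‖x n - x (n+1)‖^2 := by
      show ‖x₀ - x (n+1)‖^2 = _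
      rw [hsplit, norm_add_sq_real]
    linarith
  have hsmono' : Monotone s :=
    monotone_nat_of_le_succ fun n => by have := hsmono n; nlinarith [sq_nonneg ‖x n - x (n+1)‖]
  set D : ℝ := ‖x₀ - p₀‖ with hD
  have hsD : ∀ n, s n ≤ D^2 := fun n => pow_le_pow_left₀ (norm_nonneg _) (hbnd p₀ hp₀C hp₀T n) 2
  have hbddA : BddAbove (Set.range s) := by
    rw [bddAbove_def]
    exact ⟨D^2, by rintro r ⟨n, rfl⟩; exact hsD n⟩
  set A : ℝ := ⨆ n, s n with hA
  have hstend : Tendsto s atTop (𝓝 A) := tendsto_atTop_ciSup hsmono' hbddA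
  have hsA : ∀ n, s n ≤ A := fun n => le_ciSup hbddA n
  have hAle : ∀ p ∈ C, T p = p → A ≤ ‖x₀ - p‖^2 := by
    intro p hp hpT
    refine le_of_tendsto hstend (Eventually.of_forall fun n => ?_)
    exact pow_le_pow_left₀ (norm_nonneg _) (hbnd p hp hpT n) 2
  -- consecutive differences tend to zero
  set e : ℕ → ℝ := fun n => ‖x n - x (n+1)‖ with he
  have he2 : Tendsto (fun n => e n ^ 2) atTop (𝓝 0) := by
    have hup : Tendsto (fun n => s (n+1) - s n) atTop (𝓝 (A - A)) :=
      (hstend.comp (tendsto_add_atTop_nat 1)).sub hstend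
    rw [sub_self] at hup
    exact squeeze_zero (fun n => sq_nonneg _) (fun n => by have := hsmono n; linarith) hup
  have hetend : Tendsto e atTop (𝓝 0) := myx_tendsto_of_sq (fun n => norm_nonneg _) he2
  -- global bounds
  set B : ℝ := ‖x₀‖ + D with hB
  have hxB : ∀ n, ‖x n‖ ≤ B := by
    intro n
    calc ‖x n‖ = ‖x₀ - (x₀ - x n)‖ := by rw [sub_sub_cancel]
      _ ≤ ‖x₀‖ + ‖x₀ - x n‖ := norm_sub_le _ _
      _ ≤ ‖x₀‖ + D := by linarith [hbnd p₀ hp₀C hp₀T n]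
  have hxp₀ : ∀ n, ‖x n - p₀‖ ≤ 2*D := by
    intro n
    calc ‖x n - p₀‖ = ‖(x n - x₀) + (x₀ - p₀)‖ := by rw [sub_add_sub_cancel]
      _ ≤ ‖x n - x₀‖ + ‖x₀ - p₀‖ := norm_add_le _ _
      _ ≤ D + D := by
          rw [norm_sub_rev]
          exact add_le_add (hbnd p₀ hp₀C hp₀T n) le_rfl
      _ = 2*D := by ring
  have hTxb : ∀ n, ‖T (x n) - x n‖ ≤ 4*D := by
    intro n
    calc ‖T (x n) - x n‖ = ‖(T (x n) - p₀) + (p₀ - x n)‖ := by rw [sub_add_sub_cancel]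
      _ ≤ ‖T (x n) - p₀‖ + ‖p₀ - x n‖ := norm_add_le _ _
      _ ≤ ‖x n - p₀‖ + ‖x n - p₀‖ := by
          have h1 : ‖T (x n) - T p₀‖ ≤ ‖x n - p₀‖ := hne _ (hxC n) _ hp₀C
          rw [hp₀T] at h1
          rw [norm_sub_rev p₀]
          exact add_le_add h1 le_rfl
      _ ≤ 4*D := by linarith [hxp₀ n]
  -- ζ n = ‖z n - x n‖ → 0
  set ζ : ℕ → ℝ := fun n => ‖z n - x n‖ with hζdef
  have hζeq : ∀ n, ζ n = (1 - β n) * ‖T (x n) - x n‖ := by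
    intro n
    have hzx : z n - x n = (1 - β n) • (T (x n) - x n) := by rw [hz n]; module
    show ‖z n - x n‖ = _
    rw [hzx, norm_smul, Real.norm_eq_abs, abs_of_nonneg (by linarith [(hβ n).2])]
  have hζtend : Tendsto ζ atTop (𝓝 0) := by
    have hb1 : Tendsto (fun n => (1 - β n) * (4*D)) atTop (𝓝 ((1-1) * (4*D))) :=
      (tendsto_const_nhds.sub hβlim).mul_const _
    rw [show ((1:ℝ)-1) * (4*D) = 0 by ring] at hb1
    refine squeeze_zero (fun n => norm_nonneg _) (fun n => ?_) hb1
    rw [hζeq n]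
    exact mul_le_mul_of_nonneg_left (hTxb n) (by linarith [(hβ n).2])
  -- ‖T (z n) - x n‖ → 0
  have hyx : ∀ n, ‖y n - x n‖ ≤ 2 * e n + ζ n := by
    intro n
    have hx1C := (hCmem n _).mp (hxproj n).1.1
    have h1 : ‖y n - x (n+1)‖^2 ≤ α n * ‖x n - x (n+1)‖^2 + (1 - α n) * ‖z n - x (n+1)‖^2 :=
      hx1C.2
    have h2 : ‖z n - x (n+1)‖ ≤ ζ n + e n := by
      calc ‖z n - x (n+1)‖ = ‖(z n - x n) + (x n - x (n+1))‖ := by rw [sub_add_sub_cancel]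
        _ ≤ ζ n + e n := norm_add_le _ _
    have he0 : (0:ℝ) ≤ e n := norm_nonneg _
    have hζ0 : (0:ℝ) ≤ ζ n := norm_nonneg _
    have h3 : ‖y n - x (n+1)‖^2 ≤ (e n + ζ n)^2 := by
      have hz2 : ‖z n - x (n+1)‖^2 ≤ (ζ n + e n)^2 :=
        pow_le_pow_left₀ (norm_nonneg _) h2 2
      have he2' : ‖x n - x (n+1)‖^2 ≤ (e n + ζ n)^2 := by
        have : ‖x n - x (n+1)‖ = e n := rfl
        nlinarith
      nlinarith [(hα n).1, (hα n).2]
    have h4 : ‖y n - x (n+1)‖ ≤ e n + ζ n :=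
      (pow_le_pow_iff_left₀ (norm_nonneg _) (add_nonneg he0 hζ0) two_ne_zero).mp h3
    calc ‖y n - x n‖ = ‖(y n - x (n+1)) + (x (n+1) - x n)‖ := by rw [sub_add_sub_cancel]
      _ ≤ ‖y n - x (n+1)‖ + ‖x (n+1) - x n‖ := norm_add_le _ _
      _ ≤ (e n + ζ n) + e n := by
          rw [norm_sub_rev (x (n+1))]
          exact add_le_add h4 le_rfl
      _ = 2 * e n + ζ n := by ring
  have hTzx : ∀ n, ‖T (z n) - x n‖ ≤ (2 * e n + ζ n)/δ := by
    intro n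
    have hyeq : y n - x n = (1 - α n) • (T (z n) - x n) := by rw [hy n]; module
    have hnorm : ‖y n - x n‖ = (1 - α n) * ‖T (z n) - x n‖ := by
      rw [hyeq, norm_smul, Real.norm_eq_abs, abs_of_nonneg (by linarith [(hα n).2])]
    have hδα : δ ≤ 1 - α n := by linarith [hαδ n]
    have hδ0 : (0:ℝ) < δ := hδ.1
    rw [le_div_iff₀ hδ0]
    calc ‖T (z n) - x n‖ * δ ≤ (1 - α n) * ‖T (z n) - x n‖ := by
          nlinarith [norm_nonneg (T (z n) - x n)]
      _ = ‖y n - x n‖ := hnorm.symm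
      _ ≤ 2 * e n + ζ n := hyx n
  have hTztend : Tendsto (fun n => ‖T (z n) - x n‖) atTop (𝓝 0) := by
    have hup : Tendsto (fun n => (2 * e n + ζ n)/δ) atTop (𝓝 ((2*0+0)/δ)) :=
      (((hetend.const_mul 2).add hζtend).div_const δ)
    rw [show ((2:ℝ)*0+0)/δ = 0 by ring] at hup
    exact squeeze_zero (fun n => norm_nonneg _) hTzx hup
  -- ε n = ‖T (x n) - x n‖ → 0
  set ε : ℕ → ℝ := fun n => ‖T (x n) - x n‖ with hεdef
  have hεtend : Tendsto ε atTop (𝓝 0) := by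
    have hb : ∀ n, ε n ≤ ζ n + ‖T (z n) - x n‖ := by
      intro n
      have h1 : ‖T (x n) - T (z n)‖ ≤ ‖x n - z n‖ := hne _ (hxC n) _ (hzC n)
      calc ε n = ‖(T (x n) - T (z n)) + (T (z n) - x n)‖ := by
            show ‖T (x n) - x n‖ = _
            rw [sub_add_sub_cancel]
        _ ≤ ‖T (x n) - T (z n)‖ + ‖T (z n) - x n‖ := norm_add_le _ _
        _ ≤ ζ n + ‖T (z n) - x n‖ := by
            rw [norm_sub_rev (x n)] at h1
            exact add_le_add h1 le_rfl
    have hup : Tendsto (fun n => ζ n + ‖T (z n) - x n‖) atTop (𝓝 (0+0)) :=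
      hζtend.add hTztend
    rw [add_zero] at hup
    exact squeeze_zero (fun n => norm_nonneg _) hb hup
  -- ultrafilter limit functional
  obtain ⟨U, hU⟩ := Filter.exists_ultrafilter_le (atTop : Filter ℕ)
  have hφex : ∀ v : H, ∃ L, Tendsto (fun n => ‖x n - v‖^2) (↑U) (𝓝 L) := by
    intro v
    refine myx_ultralim_exists U _ ((B + ‖v‖)^2) fun n => ?_
    rw [abs_of_nonneg (sq_nonneg _)]
    refine pow_le_pow_left₀ (norm_nonneg _) ?_ 2
    calc ‖x n - v‖ ≤ ‖x n‖ + ‖v‖ := norm_sub_le _ _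
      _ ≤ B + ‖v‖ := by linarith [hxB n]
  choose φ hφ using hφex
  have hφnn : ∀ v, 0 ≤ φ v := fun v => ge_of_tendsto' (hφ v) fun n => sq_nonneg _
  -- exact segment identity for φ
  have hcomb : ∀ (t : ℝ) (u v w : H), ‖((1-t) • u + t • v) - w‖^2
      = (1-t)*‖u - w‖^2 + t*‖v - w‖^2 - (1-t)*t*‖u - v‖^2 := by
    intro t u v w
    have h := myx_comb_sq (1-t) u v w
    rw [show (1:ℝ) - (1-t) = t from by ring] at h
    exact h
  have hφseg : ∀ (t : ℝ) (u v : H), φ ((1-t) • u + t • v)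
      = (1-t) * φ u + t * φ v - (1-t)*t*‖u - v‖^2 := by
    intro t u v
    have hpt : ∀ n, ‖x n - ((1-t) • u + t • v)‖^2
        = (1-t)*‖x n - u‖^2 + t*‖x n - v‖^2 - (1-t)*t*‖u - v‖^2 := by
      intro n
      rw [norm_sub_rev (x n), hcomb, norm_sub_rev u, norm_sub_rev v]
    have hrhs : Tendsto (fun n => (1-t)*‖x n - u‖^2 + t*‖x n - v‖^2 - (1-t)*t*‖u - v‖^2)
        (↑U) (𝓝 ((1-t) * φ u + t * φ v - (1-t)*t*‖u - v‖^2)) :=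
      (((hφ u).const_mul (1-t)).add ((hφ v).const_mul t)).sub tendsto_const_nhds
    exact tendsto_nhds_unique (hφ _) (hrhs.congr fun n => (hpt n).symm)
  -- Lipschitz-type bound for φ
  have hφlip : ∀ u v : H, φ u ≤ φ v + (2*B + 2*‖v‖ + ‖v - u‖) * ‖v - u‖ := by
    intro u v
    refine le_of_tendsto_of_tendsto' (hφ u) ((hφ v).add tendsto_const_nhds) fun n => ?_
    have h1 : ‖x n - u‖ ≤ ‖x n - v‖ + ‖v - u‖ := by
      calc ‖x n - u‖ = ‖(x n - v) + (v - u)‖ := by rw [sub_add_sub_cancel]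
        _ ≤ ‖x n - v‖ + ‖v - u‖ := norm_add_le _ _
    have h2 : ‖x n - v‖ ≤ B + ‖v‖ := by
      calc ‖x n - v‖ ≤ ‖x n‖ + ‖v‖ := norm_sub_le _ _
        _ ≤ B + ‖v‖ := by linarith [hxB n]
    have h1' : ‖x n - u‖^2 ≤ (‖x n - v‖ + ‖v - u‖)^2 := pow_le_pow_left₀ (norm_nonneg _) h1 2
    nlinarith [mul_le_mul_of_nonneg_right h2 (norm_nonneg (v - u)), norm_nonneg (v - u)]
  -- midpoint inequality
  have hmid : ∀ u ∈ C, ∀ w ∈ C,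
      ‖u - w‖^2 ≤ 2*φ u + 2*φ w - 4*φ ((1/2 : ℝ) • u + (1/2 : ℝ) • w) := by
    intro u _ w _
    have h := hφseg (1/2) u w
    rw [show (1:ℝ) - 1/2 = 1/2 from by norm_num] at h
    rw [h]
    ring_nf
    linarith
  obtain ⟨c, hcC, hcmin⟩ := myx_exists_minimizer C hclosed hconv ⟨x₀, hx₀C⟩ φ (2*B)
    (fun v _ => hφnn v) hφlip hmid
  -- strong convexity of φ at the minimizer
  have hstrong : ∀ v ∈ C, φ c + ‖c - v‖^2 ≤ φ v := by
    intro v hv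
    have key : ∀ t : ℝ, 0 < t → t ≤ 1 → (1-t)*‖c - v‖^2 ≤ φ v - φ c := by
      intro t ht0 ht1
      have hmem : (1-t) • c + t • v ∈ C := hconv hcC hv (by linarith) ht0.le (by ring)
      have h := hcmin _ hmem
      rw [hφseg t c v] at h
      have h' : t * ((1-t)*‖c - v‖^2) ≤ t * (φ v - φ c) := by nlinarith
      exact le_of_mul_le_mul_left h' ht0
    have hgt : Tendsto (fun k : ℕ => (1 - 1/(k+1 : ℝ))*‖c - v‖^2) atTop
        (𝓝 ((1 - 0)*‖c - v‖^2)) :=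
      (tendsto_const_nhds.sub tendsto_one_div_add_atTop_nhds_zero_nat).mul_const _
    rw [sub_zero, one_mul] at hgt
    have hle : ‖c - v‖^2 ≤ φ v - φ c := by
      refine le_of_tendsto' hgt fun k => ?_
      refine key (1/(k+1)) (by positivity) ?_
      rw [div_le_one (by positivity)]
      have : (0:ℝ) ≤ (k:ℝ) := Nat.cast_nonneg k
      linarith
    linarith
  -- the minimizer is a fixed point
  have hεU : Tendsto ε (↑U) (𝓝 0) := hεtend.mono_left hU
  have hφTc : φ (T c) ≤ φ c := by
    have hrhs : Tendsto (fun n => ‖x n - c‖^2 + ε n * (ε n + 2*(B + ‖c‖))) (↑U)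
        (𝓝 (φ c + 0 * (0 + 2*(B + ‖c‖)))) :=
      (hφ c).add (hεU.mul (hεU.add tendsto_const_nhds))
    rw [show φ c + 0 * (0 + 2*(B + ‖c‖)) = φ c from by ring] at hrhs
    refine le_of_tendsto_of_tendsto' (hφ (T c)) hrhs fun n => ?_
    have h1 : ‖x n - T c‖ ≤ ε n + ‖x n - c‖ := by
      calc ‖x n - T c‖ = ‖(x n - T (x n)) + (T (x n) - T c)‖ := by rw [sub_add_sub_cancel]
        _ ≤ ‖x n - T (x n)‖ + ‖T (x n) - T c‖ := norm_add_le _ _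
        _ ≤ ε n + ‖x n - c‖ := by
            have h2 := hne _ (hxC n) _ hcC
            have h3 : ‖x n - T (x n)‖ = ε n := norm_sub_rev _ _
            linarith
    have h4 : ‖x n - c‖ ≤ B + ‖c‖ := by
      calc ‖x n - c‖ ≤ ‖x n‖ + ‖c‖ := norm_sub_le _ _
        _ ≤ B + ‖c‖ := by linarith [hxB n]
    have h5 : ‖x n - T c‖^2 ≤ (ε n + ‖x n - c‖)^2 := pow_le_pow_left₀ (norm_nonneg _) h1 2
    have h6 : (0:ℝ) ≤ ε n := norm_nonneg _
    have h7 := mul_le_mul_of_nonneg_left h4 h6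
    have hexp : (ε n + ‖x n - c‖)^2 = ε n^2 + 2*(ε n * ‖x n - c‖) + ‖x n - c‖^2 := by ring
    have hexp2 : ε n * (ε n + 2*(B + ‖c‖)) = ε n^2 + 2*(ε n * (B + ‖c‖)) := by ring
    linarith
  have hTc : T c = c := by
    have h2 := hstrong (T c) (hT hcC)
    have h3 : ‖c - T c‖^2 = 0 := le_antisymm (by linarith) (sq_nonneg _)
    have h4 : c - T c = 0 := norm_eq_zero.mp ((pow_eq_zero_iff two_ne_zero).mp h3)
    have := sub_eq_zero.mp h4
    exact this.symm
  -- identification of φ x₀ with A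
  have hφx₀ : φ x₀ = A := by
    have hsU : Tendsto (fun n => ‖x n - x₀‖^2) (↑U) (𝓝 A) := by
      refine (hstend.mono_left hU).congr fun n => ?_
      show ‖x₀ - x n‖^2 = ‖x n - x₀‖^2
      rw [norm_sub_rev]
    exact tendsto_nhds_unique (hφ x₀) hsU
  have hx₀c : ‖x₀ - c‖^2 ≤ A := by
    have h := hstrong x₀ hx₀C
    rw [hφx₀] at h
    have := hφnn c
    rw [norm_sub_rev]
    linarith
  -- strong convergence x n → c
  have hxc : ∀ n, ‖x n - c‖^2 ≤ A - s n := by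
    intro n
    have hcQ := ((hQmem n c).mp (hFQ n c hcC hTc)).2
    have hsplit : x₀ - c = (x₀ - x n) + (x n - c) := by abel
    have hid : ‖x₀ - c‖^2 = ‖x₀ - x n‖^2 + 2*(inner ℝ (x₀ - x n) (x n - c) : ℝ) + ‖x n - c‖^2 := by
      rw [hsplit, norm_add_sq_real]
    have hsn : s n = ‖x₀ - x n‖^2 := rfl
    linarith [hx₀c]
  have hxtend : Tendsto x atTop (𝓝 c) := by
    have hup : Tendsto (fun n => A - s n) atTop (𝓝 (A - A)) := tendsto_const_nhds.sub hstend
    rw [sub_self] at hup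
    have hsq : Tendsto (fun n => ‖x n - c‖^2) atTop (𝓝 0) :=
      squeeze_zero (fun n => sq_nonneg _) hxc hup
    have hn : Tendsto (fun n => ‖x n - c‖) atTop (𝓝 0) :=
      myx_tendsto_of_sq (fun n => norm_nonneg _) hsq
    exact tendsto_iff_norm_sub_tendsto_zero.mpr hn
  refine ⟨c, ⟨hcC, hTc⟩, fun p hp hpT => ?_, hxtend⟩
  have h1 : ‖x₀ - c‖^2 ≤ ‖x₀ - p‖^2 := le_trans hx₀c (hAle p hp hpT)
  exact (pow_le_pow_iff_left₀ (norm_nonneg _) (norm_nonneg _) two_ne_zero).mp h1
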